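/- Let t0 > 0, let b : [t0,∞) → ℝ be continuous, let λ > 0, and let u be a solution of the damped oscillator equation u'' + b(t)u' + λ²u = 0 on [t0,∞) with u(t0)² + u'(t0)² > 0. Then there exist functions ρ : [t0,∞) → (0,+∞) and θ : [t0,∞) → ℝ of class C¹ such that: (a) u(t) = (1/λ)ρ(t)cos(θ(t)) and u'(t) = −ρ(t)sin(θ(t)) for every t ≥ t0; (b) ρ'(t) = −ρ(t)·b(t)·sin²(θ(t)) and θ'(t) = λ − (1/2)b(t)·sin(2θ(t)) for every t ≥ t0; (c) the function h(t) := θ(t) − λt satisfies |h'(t)| ≤ (1/2)|b(t)| for every t ≥ t0; (d) u'(t)² + λ²u(t)² = (u'(t0)² + λ²u(t0)²)·exp(−2∫_{t0}^t b(s)sin²(θ(s)) ds) for every t ≥ t0. -/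

import Mathlib

open Real Set Filter MeasureTheory intervalIntegral

private lemma aux_hasDerivAt_integral {f : ℝ → ℝ} (hf : Continuous f) (a t : ℝ) :
    HasDerivAt (fun x => ∫ s in a..x, f s) (f t) t :=
  intervalIntegral.integral_hasDerivAt_right (hf.intervalIntegrable a t)
    (hf.stronglyMeasurableAtFilter _ _) hf.continuousAt

private lemma aux_const_of_deriv_zero {f : ℝ → ℝ} {a : ℝ}
    (h : ∀ t ∈ Ici a, HasDerivAt f 0 t) : ∀ t ∈ Ici a, f t = f a := by
  intro t ht
  have hc : ContinuousOn f (Icc a t) := fun x hx =>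
    (h x hx.1).continuousAt.continuousWithinAt
  have hd : ∀ x ∈ Ico a t, HasDerivWithinAt f 0 (Ici x) x := fun x hx =>
    (h x hx.1).hasDerivWithinAt
  exact constant_of_has_deriv_right_zero hc hd t ⟨ht, le_rfl⟩

set_option maxHeartbeats 1000000 in
theorem polar_representation
    (t0 lam : ℝ) (ht0 : 0 < t0) (hlam : 0 < lam)
    (b : ℝ → ℝ) (hb : ContinuousOn b (Ici t0))
    (u u' u'' : ℝ → ℝ)
    (hud : ∀ t ∈ Ici t0, HasDerivAt u (u' t) t)
    (hu'd : ∀ t ∈ Ici t0, HasDerivAt u' (u'' t) t)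
    (hu''c : ContinuousOn u'' (Ici t0))
    (heq : ∀ t ∈ Ici t0, u'' t + b t * u' t + lam ^ 2 * u t = 0)
    (hinit : 0 < u t0 ^ 2 + u' t0 ^ 2) :
    ∃ ρ θ ρ' θ' : ℝ → ℝ,
      (∀ t ∈ Ici t0, HasDerivAt ρ (ρ' t) t) ∧
      (∀ t ∈ Ici t0, HasDerivAt θ (θ' t) t) ∧
      ContinuousOn ρ' (Ici t0) ∧ ContinuousOn θ' (Ici t0) ∧
      (∀ t ∈ Ici t0, 0 < ρ t) ∧
      (∀ t ∈ Ici t0, u t = (1 / lam) * ρ t * Real.cos (θ t) ∧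
        u' t = - ρ t * Real.sin (θ t)) ∧
      (∀ t ∈ Ici t0, ρ' t = - ρ t * b t * Real.sin (θ t) ^ 2 ∧
        θ' t = lam - (1 / 2) * b t * Real.sin (2 * θ t)) ∧
      (∀ t ∈ Ici t0, |θ' t - lam| ≤ (1 / 2) * |b t|) ∧
      (∀ t ∈ Ici t0,
        u' t ^ 2 + lam ^ 2 * u t ^ 2 =
          (u' t0 ^ 2 + lam ^ 2 * u t0 ^ 2) *
            Real.exp (-2 * ∫ s in t0..t, b s * Real.sin (θ s) ^ 2)) := by
  -- the energy
  set E : ℝ → ℝ := fun t => u' t ^ 2 + lam ^ 2 * u t ^ 2 with hEdef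
  have hEnn : ∀ t, 0 ≤ E t := fun t => by positivity
  have hEder : ∀ t ∈ Ici t0, HasDerivAt E (-2 * b t * u' t ^ 2) t := by
    intro t ht
    have h1 := ((hu'd t ht).pow 2).add (((hud t ht).pow 2).const_mul (lam ^ 2))
    refine h1.congr_deriv (Eq.symm ?_)
    push_cast
    linear_combination (-2 * u' t) * heq t ht
  have hucont : ContinuousOn u (Ici t0) := fun t ht =>
    (hud t ht).continuousAt.continuousWithinAt
  have hu'cont : ContinuousOn u' (Ici t0) := fun t ht =>
    (hu'd t ht).continuousAt.continuousWithinAt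
  have hEcont : ContinuousOn E (Ici t0) := fun t ht =>
    (hEder t ht).continuousAt.continuousWithinAt
  -- continuous extension of b
  have hmax : ∀ x : ℝ, max x t0 ∈ Ici t0 := fun x => mem_Ici.mpr (le_max_right x t0)
  have hmaxc : Continuous (fun x : ℝ => max x t0) := continuous_id.max continuous_const
  have hbbc : Continuous (fun t => b (max t t0)) := hb.comp_continuous hmaxc hmax
  -- positivity of the energy via a monotone auxiliary function
  have hEt0 : 0 < E t0 := by
    show 0 < u' t0 ^ 2 + lam ^ 2 * u t0 ^ 2
    have h : u t0 ≠ 0 ∨ u' t0 ≠ 0 := by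
      by_contra hcon
      push_neg at hcon
      rw [hcon.1, hcon.2] at hinit
      norm_num at hinit
    rcases h with h | h
    · have h2 : 0 < |u t0| ^ 2 := pow_pos (abs_pos.mpr h) 2
      rw [sq_abs] at h2
      nlinarith [sq_nonneg (u' t0), mul_pos (pow_pos hlam 2) h2]
    · have h2 : 0 < |u' t0| ^ 2 := pow_pos (abs_pos.mpr h) 2
      rw [sq_abs] at h2
      nlinarith [mul_nonneg (pow_pos hlam 2).le (sq_nonneg (u t0))]
  have hEpos : ∀ t ∈ Ici t0, 0 < E t := by
    have hBc : Continuous (fun t => |b (max t t0)|) := hbbc.abs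
    set I : ℝ → ℝ := fun t => ∫ s in t0..t, |b (max s t0)| with hIdef
    have hIder : ∀ t, HasDerivAt I (|b (max t t0)|) t :=
      fun t => aux_hasDerivAt_integral hBc t0 t
    set H : ℝ → ℝ := fun t => E t * Real.exp (2 * I t) with hHdef
    have hHder : ∀ t ∈ Ici t0, HasDerivAt H
        ((-2 * b t * u' t ^ 2 + 2 * |b (max t t0)| * E t) * Real.exp (2 * I t)) t := by
      intro t ht
      have h1 := (hEder t ht).mul (((hIder t).const_mul 2).exp)
      refine h1.congr_deriv (Eq.symm ?_)
      ring
    have hHmono : MonotoneOn H (Ici t0) := by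
      apply monotoneOn_of_deriv_nonneg (convex_Ici t0)
      · exact fun t ht => (hHder t ht).continuousAt.continuousWithinAt
      · intro t ht
        rw [interior_Ici] at ht
        exact (hHder t (le_of_lt ht : t0 ≤ t)).differentiableAt.differentiableWithinAt
      · intro t ht
        rw [interior_Ici] at ht
        have ht' : t ∈ Ici t0 := (le_of_lt ht : t0 ≤ t)
        rw [(hHder t ht').deriv]
        have hbeq : max t t0 = t := max_eq_left (le_of_lt ht)
        rw [hbeq]
        have h1 : b t ≤ |b t| := le_abs_self _
        have h2 : u' t ^ 2 ≤ E t := by simp only [hEdef]; nlinarith [sq_nonneg (u t)]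
        have h3 : (0:ℝ) ≤ |b t| := abs_nonneg _
        have : 0 ≤ -2 * b t * u' t ^ 2 + 2 * |b t| * E t := by
          nlinarith [sq_nonneg (u' t), hEnn t]
        positivity
    intro t ht
    have hH0 : H t0 = E t0 := by
      simp only [hHdef, hIdef, intervalIntegral.integral_same, mul_zero, Real.exp_zero, mul_one]
    have := hHmono (self_mem_Ici) ht (mem_Ici.mp ht)
    rw [hH0] at this
    have hpos : 0 < E t * Real.exp (2 * I t) := lt_of_lt_of_le hEt0 this
    rcases mul_pos_iff.mp hpos with ⟨h, _⟩ | ⟨_, h⟩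
    · exact h
    · exact absurd h (not_lt.mpr (Real.exp_pos _).le)
  -- the radius
  set ρ : ℝ → ℝ := fun t => Real.sqrt (E t) with hρdef
  have hρpos : ∀ t ∈ Ici t0, 0 < ρ t := fun t ht => Real.sqrt_pos.mpr (hEpos t ht)
  have hρsq : ∀ t, ρ t ^ 2 = E t := fun t => Real.sq_sqrt (hEnn t)
  set ρ' : ℝ → ℝ := fun t => -(b t * u' t ^ 2) / ρ t with hρ'def
  have hρder : ∀ t ∈ Ici t0, HasDerivAt ρ (ρ' t) t := by
    intro t ht
    have h := (hEder t ht).sqrt (ne_of_gt (hEpos t ht))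
    convert h using 1
    have hρne : ρ t ≠ 0 := (hρpos t ht).ne'
    simp only [hρ'def, hρdef]
    field_simp
  have hρcont : ContinuousOn ρ (Ici t0) := fun t ht =>
    (hρder t ht).continuousAt.continuousWithinAt
  have hρ'cont : ContinuousOn ρ' (Ici t0) := by
    apply ContinuousOn.div
    · exact ((hb.mul (hu'cont.pow 2)).neg)
    · exact hρcont
    · exact fun t ht => (hρpos t ht).ne'
  -- the phase speed
  set ψ : ℝ → ℝ := fun t => lam + lam * b t * u t * u' t / E t with hψdef
  have hψcont : ContinuousOn ψ (Ici t0) := by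
    apply ContinuousOn.add continuousOn_const
    exact ContinuousOn.div (((continuousOn_const.mul hb).mul hucont).mul hu'cont) hEcont
      (fun t ht => (hEpos t ht).ne')
  set φ : ℝ → ℝ := fun t => ψ (max t t0) with hφdef
  have hφc : Continuous φ := hψcont.comp_continuous hmaxc hmax
  have hφeq : ∀ t ∈ Ici t0, φ t = ψ t := fun t ht => by
    simp only [hφdef, max_eq_left (mem_Ici.mp ht)]
  -- initial phase
  set c : ℝ → ℝ := fun t => lam * u t / ρ t with hcdef
  set s : ℝ → ℝ := fun t => -(u' t) / ρ t with hsdef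
  have hcs : ∀ t ∈ Ici t0, c t ^ 2 + s t ^ 2 = 1 := by
    intro t ht
    have hρne : ρ t ≠ 0 := (hρpos t ht).ne'
    have h2 := hρsq t
    simp only [hcdef, hsdef]
    field_simp
    simp only [hEdef] at h2
    nlinarith [h2]
  set z : ℂ := ⟨c t0, s t0⟩ with hzdef
  have hzabs : ‖z‖ = 1 := by
    rw [Complex.norm_def, Complex.normSq_mk]
    have := hcs t0 self_mem_Ici
    rw [show c t0 * c t0 + s t0 * s t0 = c t0 ^ 2 + s t0 ^ 2 by ring, this, Real.sqrt_one]
  have hzne : z ≠ 0 := by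
    intro h
    rw [h] at hzabs
    simp at hzabs
  set θ0 : ℝ := Complex.arg z with hθ0def
  have hcosθ0 : Real.cos θ0 = c t0 := by
    rw [hθ0def, Complex.cos_arg hzne, hzabs]
    simp [hzdef]
  have hsinθ0 : Real.sin θ0 = s t0 := by
    rw [hθ0def, Complex.sin_arg, hzabs]
    simp [hzdef]
  -- the phase
  set θ : ℝ → ℝ := fun t => θ0 + ∫ s' in t0..t, φ s' with hθdef
  have hθder : ∀ t, HasDerivAt θ (φ t) t := fun t =>
    (aux_hasDerivAt_integral hφc t0 t).const_add θ0
  have hθt0 : θ t0 = θ0 := by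
    simp only [hθdef, intervalIntegral.integral_same, add_zero]
  -- derivatives of c and s
  set c' : ℝ → ℝ := fun t => (lam * u' t * ρ t - lam * u t * ρ' t) / ρ t ^ 2 with hc'def
  set s' : ℝ → ℝ := fun t => (-(u'' t) * ρ t - -(u' t) * ρ' t) / ρ t ^ 2 with hs'def
  have hcder : ∀ t ∈ Ici t0, HasDerivAt c (c' t) t := fun t ht =>
    ((hud t ht).const_mul lam).div (hρder t ht) (hρpos t ht).ne'
  have hsder : ∀ t ∈ Ici t0, HasDerivAt s (s' t) t := fun t ht =>
    ((hu'd t ht).neg).div (hρder t ht) (hρpos t ht).ne'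
  -- the key identities
  have hkey1 : ∀ t ∈ Ici t0, c' t = -(φ t) * s t := by
    intro t ht
    have hρne : ρ t ≠ 0 := (hρpos t ht).ne'
    have hE2 : E t = ρ t ^ 2 := (hρsq t).symm
    rw [hφeq t ht]
    simp only [hc'def, hsdef, hψdef, hρ'def, hE2]
    field_simp
    ring
  have hkey2 : ∀ t ∈ Ici t0, s' t = φ t * c t := by
    intro t ht
    have hρne : ρ t ≠ 0 := (hρpos t ht).ne'
    have hE2 : E t = ρ t ^ 2 := (hρsq t).symm
    have hu'' : u'' t = -(b t * u' t) - lam ^ 2 * u t := by linarith [heq t ht]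
    rw [hφeq t ht]
    simp only [hs'def, hcdef, hψdef, hρ'def, hE2, hu'']
    have hρsq' : ρ t ^ 2 = u' t ^ 2 + lam ^ 2 * u t ^ 2 := hρsq t
    field_simp
    linear_combination (b t * u' t) * hρsq'
  -- the deviation function is constant zero
  set D : ℝ → ℝ := fun t => (c t - Real.cos (θ t)) ^ 2 + (s t - Real.sin (θ t)) ^ 2
    with hDdef
  have hDder : ∀ t ∈ Ici t0, HasDerivAt D 0 t := by
    intro t ht
    have hcos : HasDerivAt (fun x => Real.cos (θ x)) (-Real.sin (θ t) * φ t) t :=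
      (hθder t).cos
    have hsin : HasDerivAt (fun x => Real.sin (θ x)) (Real.cos (θ t) * φ t) t :=
      (hθder t).sin
    have h1 := (((hcder t ht).sub hcos).pow 2).add (((hsder t ht).sub hsin).pow 2)
    refine h1.congr_deriv (Eq.symm ?_)
    rw [hkey1 t ht, hkey2 t ht]
    simp only [Pi.sub_apply]
    push_cast
    ring
  have hD0 : ∀ t ∈ Ici t0, D t = 0 := by
    have hDt0 : D t0 = 0 := by
      simp only [hDdef, hθt0, hcosθ0, hsinθ0]
      ring
    intro t ht
    rw [aux_const_of_deriv_zero hDder t ht, hDt0]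
  have hceq : ∀ t ∈ Ici t0, c t = Real.cos (θ t) ∧ s t = Real.sin (θ t) := by
    intro t ht
    have h := hD0 t ht
    simp only [hDdef] at h
    have e1 : (c t - Real.cos (θ t)) ^ 2 = 0 := by
      nlinarith [sq_nonneg (c t - Real.cos (θ t)), sq_nonneg (s t - Real.sin (θ t))]
    have e2 : (s t - Real.sin (θ t)) ^ 2 = 0 := by
      nlinarith [sq_nonneg (c t - Real.cos (θ t)), sq_nonneg (s t - Real.sin (θ t))]
    have f1 := sq_eq_zero_iff.mp e1
    have f2 := sq_eq_zero_iff.mp e2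
    constructor <;> linarith
  -- representation formulas
  have hrep : ∀ t ∈ Ici t0, u t = (1 / lam) * ρ t * Real.cos (θ t) ∧
      u' t = -ρ t * Real.sin (θ t) := by
    intro t ht
    obtain ⟨h1, h2⟩ := hceq t ht
    have hρne : ρ t ≠ 0 := (hρpos t ht).ne'
    constructor
    · rw [← h1]; simp only [hcdef]; field_simp
    · rw [← h2]; simp only [hsdef]; field_simp
  -- ODEs for ρ and θ
  have hode : ∀ t ∈ Ici t0, ρ' t = -ρ t * b t * Real.sin (θ t) ^ 2 ∧
      φ t = lam - (1 / 2) * b t * Real.sin (2 * θ t) := by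
    intro t ht
    obtain ⟨h1, h2⟩ := hceq t ht
    have hρne : ρ t ≠ 0 := (hρpos t ht).ne'
    have hE2 : E t = ρ t ^ 2 := (hρsq t).symm
    constructor
    · rw [← h2]
      simp only [hρ'def, hsdef]
      field_simp
    · rw [Real.sin_two_mul, ← h1, ← h2, hφeq t ht]
      simp only [hψdef, hcdef, hsdef, hE2]
      field_simp
      ring
  -- the energy identity
  have hθcont : Continuous θ := by
    rw [continuous_iff_continuousAt]
    exact fun t => (hθder t).continuousAt
  have hφ2c : Continuous (fun t => b (max t t0) * Real.sin (θ t) ^ 2) :=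
    hbbc.mul ((Real.continuous_sin.comp hθcont).pow 2)
  set J : ℝ → ℝ := fun t => ∫ s' in t0..t, b (max s' t0) * Real.sin (θ s') ^ 2 with hJdef
  have hJder : ∀ t, HasDerivAt J (b (max t t0) * Real.sin (θ t) ^ 2) t := fun t =>
    aux_hasDerivAt_integral hφ2c t0 t
  set F : ℝ → ℝ := fun t => E t * Real.exp (2 * J t) with hFdef
  have hFder : ∀ t ∈ Ici t0, HasDerivAt F 0 t := by
    intro t ht
    have h1 := (hEder t ht).mul (((hJder t).const_mul 2).exp)
    refine h1.congr_deriv (Eq.symm ?_)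
    have hbeq : max t t0 = t := max_eq_left (mem_Ici.mp ht)
    rw [hbeq]
    have h2 := (hrep t ht).2
    have hρne : ρ t ≠ 0 := (hρpos t ht).ne'
    have hsin : Real.sin (θ t) = -(u' t) / ρ t := by
      field_simp at h2 ⊢
      linarith [h2]
    have hE2 : E t = ρ t ^ 2 := (hρsq t).symm
    rw [hsin, hE2]
    field_simp
    ring
  have hF0 : ∀ t ∈ Ici t0, F t = E t0 := by
    intro t ht
    rw [aux_const_of_deriv_zero hFder t ht]
    simp only [hFdef, hJdef, intervalIntegral.integral_same, mul_zero, Real.exp_zero, mul_one]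
  -- assemble
  refine ⟨ρ, θ, ρ', φ, hρder, fun t _ => hθder t, hρ'cont, hφc.continuousOn, hρpos,
    hrep, hode, ?_, ?_⟩
  · intro t ht
    rw [(hode t ht).2]
    have h1 : |lam - (1/2) * b t * Real.sin (2 * θ t) - lam| =
        (1/2) * |b t| * |Real.sin (2 * θ t)| := by
      rw [show lam - (1/2) * b t * Real.sin (2 * θ t) - lam = -((1/2) * b t * Real.sin (2 * θ t))
        by ring, abs_neg, abs_mul, abs_mul]
      simp
    rw [h1]
    have h2 : |Real.sin (2 * θ t)| ≤ 1 := abs_sin_le_one _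
    nlinarith [abs_nonneg (b t)]
  · intro t ht
    have hJeq : (∫ s' in t0..t, b s' * Real.sin (θ s') ^ 2) = J t := by
      apply intervalIntegral.integral_congr
      intro x hx
      rw [uIcc_of_le (mem_Ici.mp ht)] at hx
      simp only [max_eq_left hx.1]
    rw [hJeq]
    have hF := hF0 t ht
    simp only [hFdef] at hF
    have : E t = E t0 * Real.exp (-2 * J t) := by
      have hexp : Real.exp (-2 * J t) = (Real.exp (2 * J t))⁻¹ := by
        rw [← Real.exp_neg]; ring_nf
      rw [hexp, ← hF]
      field_simp
    simpa only [hEdef] using this
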